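/- Assume L_d is twice continuously differentiable and f⁻, f⁺ are continuously differentiable. Then for every x ∈ E × E and all U, V ∈ E × E one has ω⁺(x)(U,V) − ω⁻(x)(U,V) = −df_d(x)(U,V), where f_d is regarded as a 1-form on E × E via f_d(q0,q1)(u0,u1) := f⁻(q0,q1)(u0) + f⁺(q0,q1)(u1). -/

import Mathlib

open ContinuousLinearMap

variable {E : Type*} [NormedAddCommGroup E] [NormedSpace ℝ E] [FiniteDimensional ℝ E]

/-- Partial Fréchet derivative in the first variable. -/
noncomputable def D1 (L : E × E → ℝ) (x : E × E) : E →L[ℝ] ℝ :=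
  fderiv ℝ (fun a => L (a, x.2)) x.1

/-- Partial Fréchet derivative in the second variable. -/
noncomputable def D2 (L : E × E → ℝ) (x : E × E) : E →L[ℝ] ℝ :=
  fderiv ℝ (fun b => L (x.1, b)) x.2

/-- The force 1-form `f_d` on `E × E`. -/
noncomputable def fd (fm fp : E × E → (E →L[ℝ] ℝ)) (x : E × E) : (E × E) →L[ℝ] ℝ :=
  (fm x).comp (ContinuousLinearMap.fst ℝ E E) + (fp x).comp (ContinuousLinearMap.snd ℝ E E)

/-- The 1-form `θ⁺` on `E × E`. -/
noncomputable def thetaP (Ld : E × E → ℝ) (fp : E × E → (E →L[ℝ] ℝ)) (x : E × E) :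
    (E × E) →L[ℝ] ℝ := (D2 Ld x + fp x).comp (ContinuousLinearMap.snd ℝ E E)

/-- The 1-form `θ⁻` on `E × E`. -/
noncomputable def thetaM (Ld : E × E → ℝ) (fm : E × E → (E →L[ℝ] ℝ)) (x : E × E) :
    (E × E) →L[ℝ] ℝ := -((D1 Ld x + fm x).comp (ContinuousLinearMap.fst ℝ E E))

/-- The exterior derivative of a 1-form `α` on `E × E`, as a function of two vectors. -/
noncomputable def extd (α : E × E → ((E × E) →L[ℝ] ℝ)) (x : E × E) (U V : E × E) : ℝ :=
  fderiv ℝ α x U V - fderiv ℝ α x V U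

/-- The 2-form `ω⁺ := -dθ⁺` on `E × E`. -/
noncomputable def omegaP (Ld : E × E → ℝ) (fp : E × E → (E →L[ℝ] ℝ)) (x : E × E)
    (U V : E × E) : ℝ := -extd (thetaP Ld fp) x U V

/-- The 2-form `ω⁻ := -dθ⁻` on `E × E`. -/
noncomputable def omegaM (Ld : E × E → ℝ) (fm : E × E → (E →L[ℝ] ℝ)) (x : E × E)
    (U V : E × E) : ℝ := -extd (thetaM Ld fm) x U V

/-- The forced discrete Legendre transform `FL⁺`. -/
noncomputable def FLp (Ld : E × E → ℝ) (fp : E × E → (E →L[ℝ] ℝ)) (x : E × E) :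
    E × (E →L[ℝ] ℝ) := (x.2, D2 Ld x + fp x)

/-- The forced discrete Legendre transform `FL⁻`. -/
noncomputable def FLm (Ld : E × E → ℝ) (fm : E × E → (E →L[ℝ] ℝ)) (x : E × E) :
    E × (E →L[ℝ] ℝ) := (x.1, -D1 Ld x - fm x)

/-- **`ω⁺ − ω⁻ = −d f_d`.** -/
theorem omegaP_sub_omegaM_eq_neg_extd_fd
    (Ld : E × E → ℝ) (fm fp : E × E → (E →L[ℝ] ℝ))
    (hLd : ContDiff ℝ 2 Ld) (hfm : ContDiff ℝ 1 fm) (hfp : ContDiff ℝ 1 fp) :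
    ∀ (x : E × E) (U V : E × E),
      omegaP Ld fp x U V - omegaM Ld fm x U V = -extd (fd fm fp) x U V := by

  intro x U V
  have hLd1 : Differentiable ℝ Ld := hLd.differentiable two_ne_zero
  have hD1 : D1 Ld = fun y => (fderiv ℝ Ld y).comp (ContinuousLinearMap.inl ℝ E E) := by
    funext y
    exact ((hLd1 (y.1, y.2)).hasFDerivAt.comp y.1 (hasFDerivAt_prodMk_left y.1 y.2)).fderiv
  have hD2 : D2 Ld = fun y => (fderiv ℝ Ld y).comp (ContinuousLinearMap.inr ℝ E E) := by
    funext y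
    exact ((hLd1 (y.1, y.2)).hasFDerivAt.comp y.2 (hasFDerivAt_prodMk_right y.1 y.2)).fderiv
  -- differentiability facts
  have hg : Differentiable ℝ (fun y => fderiv ℝ Ld y) :=
    (hLd.fderiv_right (m := 1) (by norm_num)).differentiable one_ne_zero
  have hfm' : Differentiable ℝ fm := hfm.differentiable one_ne_zero
  have hfp' : Differentiable ℝ fp := hfp.differentiable one_ne_zero
  have hfd : Differentiable ℝ (fd fm fp) := by
    unfold fd
    exact ((hfm'.clm_comp (differentiable_const _))).add
      ((hfp'.clm_comp (differentiable_const _)))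
  have hθm : Differentiable ℝ (thetaM Ld fm) := by
    unfold thetaM
    rw [hD1]
    exact (((hg.clm_comp (differentiable_const _)).add hfm').clm_comp
      (differentiable_const _)).neg
  -- key pointwise decomposition of θ⁺
  have hkey : thetaP Ld fp = fun y =>
      fderiv ℝ Ld y + fd fm fp y + thetaM Ld fm y := by
    funext y
    apply ContinuousLinearMap.ext
    intro u
    have hsplit : fderiv ℝ Ld y u = D1 Ld y u.1 + D2 Ld y u.2 := by
      rw [hD1, hD2]
      simp only [ContinuousLinearMap.comp_apply, ContinuousLinearMap.inl_apply,
        ContinuousLinearMap.inr_apply]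
      rw [← map_add]
      congr 1
      simp [Prod.ext_iff]
    simp only [thetaP, thetaM, fd, ContinuousLinearMap.add_apply,
      ContinuousLinearMap.comp_apply, ContinuousLinearMap.coe_fst',
      ContinuousLinearMap.coe_snd', ContinuousLinearMap.neg_apply, hsplit]
    ring
  -- derivative of θ⁺ splits
  have hderiv : fderiv ℝ (thetaP Ld fp) x =
      fderiv ℝ (fun y => fderiv ℝ Ld y) x + fderiv ℝ (fd fm fp) x
        + fderiv ℝ (thetaM Ld fm) x := by
    rw [hkey]
    rw [fderiv_fun_add (f := fun y => fderiv ℝ Ld y + fd fm fp y) ((hg.add hfd).differentiableAt) (hθm.differentiableAt),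
      fderiv_fun_add (hg.differentiableAt) (hfd.differentiableAt)]
  -- symmetry of the second derivative of Ld kills the d(dLd) term
  have hsymm : fderiv ℝ (fun y => fderiv ℝ Ld y) x U V
      = fderiv ℝ (fun y => fderiv ℝ Ld y) x V U :=
    (hLd.contDiffAt.isSymmSndFDerivAt (by simp)) U V
  simp only [omegaP, omegaM, extd, hderiv, ContinuousLinearMap.add_apply]
  rw [hsymm]
  ring
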